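/- Let Z be a standard Normal random variable and let a, b be positive real numbers. Then the total variation distance between the laws of Z/√a and Z/√b (i.e., between the centered Gaussian measures on ℝ with variances 1/a and 1/b) satisfies d_TV(Z/√a, Z/√b) ≤ |a − b| / max{a, b}. -/

import Mathlib

open MeasureTheory ProbabilityTheory Real
open scoped ENNReal

/-- Total variation distance between two measures:
the supremum over measurable sets `A` of `|μ A - ν A|`. -/
noncomputable def tvDist {χ : Type*} [MeasurableSpace χ] (μ ν : Measure χ) : ℝ :=
  ⨆ A : {s : Set χ // MeasurableSet s}, |(μ A.1).toReal - (ν A.1).toReal|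

lemma tvDist_comm {χ : Type*} [MeasurableSpace χ] (μ ν : Measure χ) :
    tvDist μ ν = tvDist ν μ := by
  unfold tvDist
  congr 1
  ext A
  exact abs_sub_comm _ _

lemma pdf_ineq (a b : ℝ) (ha : 0 < a) (hab : a ≤ b) (x : ℝ) :
    Real.sqrt (a / b) * gaussianPDFReal 0 (1 / b).toNNReal x
      ≤ gaussianPDFReal 0 (1 / a).toNNReal x := by
  have hb : 0 < b := ha.trans_le hab
  have hca : ((1 / a).toNNReal : ℝ) = 1 / a := Real.coe_toNNReal _ (by positivity)
  have hcb : ((1 / b).toNNReal : ℝ) = 1 / b := Real.coe_toNNReal _ (by positivity)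
  have hπ := Real.pi_pos
  rw [gaussianPDFReal, gaussianPDFReal, hca, hcb]
  have hcoef : Real.sqrt (a / b) * (Real.sqrt (2 * π * (1 / b)))⁻¹
      = (Real.sqrt (2 * π * (1 / a)))⁻¹ := by
    rw [← Real.sqrt_inv, ← Real.sqrt_inv, ← Real.sqrt_mul (by positivity)]
    congr 1
    field_simp
  calc Real.sqrt (a / b) * ((Real.sqrt (2 * π * (1 / b)))⁻¹ * rexp (-(x - 0) ^ 2 / (2 * (1 / b))))
      = (Real.sqrt (2 * π * (1 / a)))⁻¹ * rexp (-(x - 0) ^ 2 / (2 * (1 / b))) := by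
        rw [← mul_assoc, hcoef]
    _ ≤ (Real.sqrt (2 * π * (1 / a)))⁻¹ * rexp (-(x - 0) ^ 2 / (2 * (1 / a))) := by
        apply mul_le_mul_of_nonneg_left _ (by positivity)
        apply Real.exp_le_exp.mpr
        have e1 : -(x - 0) ^ 2 / (2 * (1 / b)) = -(x ^ 2) * b / 2 := by
          field_simp
          ring
        have e2 : -(x - 0) ^ 2 / (2 * (1 / a)) = -(x ^ 2) * a / 2 := by
          field_simp
          ring
        rw [e1, e2]
        nlinarith [sq_nonneg x]

lemma measure_ineq (a b : ℝ) (ha : 0 < a) (hab : a ≤ b) (A : Set ℝ) :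
    ENNReal.ofReal (Real.sqrt (a / b)) * gaussianReal 0 (1 / b).toNNReal A
      ≤ gaussianReal 0 (1 / a).toNNReal A := by
  have hb : 0 < b := ha.trans_le hab
  have hva : (1 / a).toNNReal ≠ 0 := (Real.toNNReal_pos.mpr (by positivity)).ne'
  have hvb : (1 / b).toNNReal ≠ 0 := (Real.toNNReal_pos.mpr (by positivity)).ne'
  rw [gaussianReal_apply _ hva, gaussianReal_apply _ hvb,
    ← lintegral_const_mul' _ _ ENNReal.ofReal_ne_top]
  refine lintegral_mono fun x => ?_
  rw [gaussianPDF_def]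
  simp only
  rw [← ENNReal.ofReal_mul (Real.sqrt_nonneg _)]
  exact ENNReal.ofReal_le_ofReal (pdf_ineq a b ha hab x)

lemma half (a b : ℝ) (ha : 0 < a) (hab : a ≤ b) :
    tvDist (gaussianReal 0 (1 / a).toNNReal) (gaussianReal 0 (1 / b).toNNReal)
      ≤ |a - b| / max a b := by
  have hb : 0 < b := ha.trans_le hab
  set μ := gaussianReal 0 (1 / a).toNNReal with hμ
  set ν := gaussianReal 0 (1 / b).toNNReal with hν
  set c := Real.sqrt (a / b) with hc
  have hc0 : 0 ≤ c := Real.sqrt_nonneg _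
  have hc1 : c ≤ 1 := by
    rw [hc]
    rw [show (1 : ℝ) = Real.sqrt 1 by simp]
    exact Real.sqrt_le_sqrt (by rw [div_le_one hb]; exact hab)
  have hcsq : c * c = a / b := Real.mul_self_sqrt (by positivity)
  have habmax : |a - b| / max a b = 1 - a / b := by
    rw [abs_of_nonpos (by linarith), max_eq_right hab]
    field_simp
    ring
  rw [habmax]
  have hfinal : 1 - c ≤ 1 - a / b := by nlinarith
  have key : ∀ A : Set ℝ, c * (ν A).toReal ≤ (μ A).toReal := by
    intro A
    have h := measure_ineq a b ha hab A
    have hfin : μ A ≠ ⊤ := (measure_lt_top μ A).ne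
    have := ENNReal.toReal_mono hfin h
    rwa [ENNReal.toReal_mul, ENNReal.toReal_ofReal hc0] at this
  refine ciSup_le fun A => ?_
  refine le_trans ?_ hfinal
  obtain ⟨A, hA⟩ := A
  have hμu : (μ Set.univ).toReal = 1 := by simp
  have hνu : (ν Set.univ).toReal = 1 := by simp
  have hcompl : ∀ (ρ : Measure ℝ) [IsProbabilityMeasure ρ],
      (ρ Aᶜ).toReal = 1 - (ρ A).toReal := by
    intro ρ hρ
    rw [measure_compl hA (measure_lt_top ρ A).ne]
    rw [ENNReal.toReal_sub_of_le (measure_mono (Set.subset_univ A)) (measure_lt_top ρ _).ne]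
    simp
  have h1 := key A
  have h2 := key Aᶜ
  rw [hcompl μ, hcompl ν] at h2
  have hp0 : 0 ≤ (μ A).toReal := ENNReal.toReal_nonneg
  have hq0 : 0 ≤ (ν A).toReal := ENNReal.toReal_nonneg
  have hp1 : (μ A).toReal ≤ 1 := by
    rw [← hμu]; exact ENNReal.toReal_mono (measure_lt_top μ _).ne (measure_mono (Set.subset_univ A))
  have hq1 : (ν A).toReal ≤ 1 := by
    rw [← hνu]; exact ENNReal.toReal_mono (measure_lt_top ν _).ne (measure_mono (Set.subset_univ A))
  rw [abs_le]
  constructor <;> nlinarith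

/-- For `Z` standard Normal and `a, b > 0`,
`d_TV(Z/√a, Z/√b) ≤ |a − b| / max{a, b}`; the law of `Z/√a` is the centered
Gaussian measure with variance `1/a`. -/
theorem stmt4 (a b : ℝ) (ha : 0 < a) (hb : 0 < b) :
    tvDist (gaussianReal 0 (1 / a).toNNReal) (gaussianReal 0 (1 / b).toNNReal)
      ≤ |a - b| / max a b := by
  rcases le_total a b with h | h
  · exact half a b ha h
  · rw [tvDist_comm, abs_sub_comm, max_comm]
    exact half b a hb h
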